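/- Let f be entire, nonvanishing on ℂ, of exponential type (|f(z)| ≤ C e^{A|z|}), and bounded on the horizontal line {t + i : t ∈ ℝ}. Then f(z) = C₀ e^{iaz} for some C₀ ∈ ℂ \ {0} and a ∈ ℝ. -/

import Mathlib

open Complex Metric Set intervalIntegral

/-- Existence of an entire logarithm for a zero-free entire function. -/
lemma exists_entire_log (f : ℂ → ℂ) (hf : Differentiable ℂ f) (hnz : ∀ z, f z ≠ 0) :
    ∃ g : ℂ → ℂ, Differentiable ℂ g ∧ ∀ z, f z = Complex.exp (g z) := by
  have hdf : Differentiable ℂ (deriv f) := by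
    have h1 : AnalyticOnNhd ℂ f Set.univ := analyticOnNhd_univ_iff_differentiable.2 hf
    exact analyticOnNhd_univ_iff_differentiable.1 h1.deriv
  set L : ℂ → ℂ := fun z => deriv f z / f z with hLdef
  have hL : Differentiable ℂ L := hdf.div hf hnz
  have hLc : Continuous L := hL.continuous
  set g : ℂ → ℂ := fun z => Complex.log (f 0) + ∫ s in (0:ℝ)..1, z * L ((s : ℂ) * z) with hgdef
  have hexp : ∀ z, f z = Complex.exp (g z) := by
    intro z
    set F : ℝ → ℂ := fun s => z * L ((s : ℂ) * z) with hFdef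
    have hFc : Continuous F := by
      apply continuous_const.mul
      exact hLc.comp (Complex.continuous_ofReal.mul continuous_const)
    set u : ℝ → ℂ := fun t => ∫ s in (0:ℝ)..t, F s with hudef
    have hu : ∀ t : ℝ, HasDerivAt u (F t) t := fun t =>
      (hFc.integral_hasStrictDerivAt 0 t).hasDerivAt
    have hft : ∀ t : ℝ, HasDerivAt (fun t : ℝ => f ((t : ℂ) * z)) (deriv f ((t : ℂ) * z) * z) t := by
      intro t
      have h1 : HasDerivAt (fun w : ℂ => f (w * z)) (deriv f ((t : ℂ) * z) * z) ((t : ℂ)) := by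
        have := (hf ((t : ℂ) * z)).hasDerivAt.comp (t : ℂ) ((hasDerivAt_id ((t : ℂ))).mul_const z)
        rw [one_mul] at this
        exact this
      exact h1.comp_ofReal
    set v : ℝ → ℂ := fun t => f ((t : ℂ) * z) * Complex.exp (-(u t)) with hvdef
    have hv : ∀ t : ℝ, HasDerivAt v 0 t := by
      intro t
      have h2 : HasDerivAt (fun t : ℝ => Complex.exp (-(u t)))
          (Complex.exp (-(u t)) * (-(F t))) t := ((hu t).neg).cexp
      have h3 : HasDerivAt v _ t := (hft t).mul h2
      convert h3 using 1
      have hne := hnz ((t : ℂ) * z)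
      simp only [hFdef, hLdef]
      field_simp
      ring
    have hconst : v 1 = v 0 :=
      is_const_of_deriv_eq_zero (fun t => (hv t).differentiableAt)
        (fun t => (hv t).deriv) 1 0
    have hv0 : v 0 = f 0 := by simp [hvdef, hudef]
    have hv1 : v 1 = f z * Complex.exp (-(u 1)) := by simp [hvdef]
    have hfz : f z = f 0 * Complex.exp (u 1) := by
      have h4 := congrArg (fun w => w * Complex.exp (u 1)) hconst
      simp only [hv1, hv0, mul_assoc, ← Complex.exp_add] at h4
      simpa using h4
    have hgz : g z = Complex.log (f 0) + u 1 := rfl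
    rw [hfz, hgz, Complex.exp_add, Complex.exp_log (hnz 0)]
  have hgc : Continuous g := by
    apply continuous_const.add
    have : Continuous (Function.uncurry fun (z : ℂ) (s : ℝ) => z * L ((s : ℂ) * z)) := by
      apply Continuous.mul continuous_fst
      exact hLc.comp ((Complex.continuous_ofReal.comp continuous_snd).mul continuous_fst)
    exact continuous_parametric_intervalIntegral_of_continuous' (μ := MeasureTheory.volume) this 0 1
  have hgd : Differentiable ℂ g := by
    intro z₀
    set h : ℂ → ℂ := fun z => g z₀ + Complex.log (f z / f z₀) with hhdef
    have hdiv1 : f z₀ / f z₀ = 1 := div_self (hnz z₀)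
    have hh : DifferentiableAt ℂ h z₀ := by
      apply (differentiableAt_const _).add
      apply DifferentiableAt.clog ((hf z₀).div_const (f z₀))
      rw [hdiv1]; exact Complex.one_mem_slitPlane
    have hd0 : g z₀ - h z₀ = 0 := by
      simp [hhdef, hdiv1, Complex.log_one]
    have hcont : ContinuousAt (fun z => g z - h z) z₀ := by
      apply hgc.continuousAt.sub
      apply continuousAt_const.add
      apply ContinuousAt.clog ((hf.continuous.continuousAt).div_const _)
      rw [hdiv1]; exact Complex.one_mem_slitPlane
    have hexp1 : ∀ z, Complex.exp (g z - h z) = 1 := by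
      intro z
      rw [Complex.exp_sub]
      have h1 : Complex.exp (h z) = f z := by
        rw [hhdef]
        simp only []
        rw [Complex.exp_add, Complex.exp_log (div_ne_zero (hnz z) (hnz z₀)), ← hexp z₀]
        rw [mul_comm, div_mul_eq_mul_div, mul_div_assoc, hdiv1, mul_one]
      rw [h1, ← hexp z]
      exact div_self (hnz z)
    have hsmall : ∀ᶠ z in nhds z₀, ‖g z - h z‖ < 1 := by
      have h2 : Filter.Tendsto (fun z => g z - h z) (nhds z₀) (nhds 0) := by
        rw [← hd0]; exact hcont
      have h3 := Metric.tendsto_nhds.mp h2 1 one_pos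
      filter_upwards [h3] with z hz
      simpa [dist_zero_right] using hz
    have heq : g =ᶠ[nhds z₀] h := by
      filter_upwards [hsmall] with z hz
      obtain ⟨n, hn⟩ := Complex.exp_eq_one_iff.1 (hexp1 z)
      have hn0 : n = 0 := by
        by_contra hne
        have h1 : (1 : ℝ) ≤ |(n : ℝ)| := by
          rw [← Int.cast_abs]
          exact_mod_cast Int.one_le_abs hne
        have h2 : ‖g z - h z‖ = |(n : ℝ)| * (2 * Real.pi) := by
          rw [hn, norm_mul, norm_mul, norm_mul]
          simp [abs_of_pos Real.pi_pos]
        rw [h2] at hz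
        nlinarith [Real.pi_gt_three]
      rw [hn0] at hn
      simp only [Int.cast_zero, zero_mul] at hn
      exact sub_eq_zero.mp hn
    exact hh.congr_of_eventuallyEq heq
  exact ⟨g, hgd, hexp⟩

/-- An entire function whose real part grows at most linearly is affine. -/
lemma entire_affine_of_re_le (g : ℂ → ℂ) (hg : Differentiable ℂ g) (a b : ℝ)
    (hre : ∀ z, (g z).re ≤ a + b * ‖z‖) :
    ∀ z, g z = g 0 + deriv g 0 * z := by
  set c₁ : ℝ := |a - (g 0).re| + 1 with hc₁
  have hc₁1 : 1 ≤ c₁ := by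
    rw [hc₁]
    linarith [abs_nonneg (a - (g 0).re)]
  -- Borel–Carathéodory-type bound
  have hbound : ∀ R : ℝ, 0 < R → ∀ z : ℂ, ‖z‖ ≤ R →
      ‖g z - g 0‖ ≤ 2 * (c₁ + |b| * (2 * R)) := by
    intro R hR z hz
    set s : ℝ := c₁ + |b| * (2 * R) with hs
    have hs1 : 1 ≤ s := by nlinarith [abs_nonneg b]
    have hspos : 0 < s := by linarith
    set G : ℂ → ℂ := fun w => g w - g 0 with hG
    have hReG : ∀ w ∈ ball (0:ℂ) (2*R), (G w).re ≤ s - 1 := by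
      intro w hw
      have hw' : ‖w‖ ≤ 2*R := (mem_ball_zero_iff.mp hw).le
      have h1 := hre w
      have h2 : b * ‖w‖ ≤ |b| * (2*R) := by
        nlinarith [le_abs_self b, abs_nonneg b, norm_nonneg w]
      have h3 : a - (g 0).re ≤ |a - (g 0).re| := le_abs_self _
      simp only [hG, Complex.sub_re]
      nlinarith
    have hden : ∀ w ∈ ball (0:ℂ) (2*R), ((2*s : ℝ) : ℂ) - G w ≠ 0 := by
      intro w hw h
      have h2 := hReG w hw
      have h3 : (((2*s : ℝ) : ℂ) - G w).re = 2*s - (G w).re := by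
        simp [Complex.sub_re]
      rw [h] at h3
      simp at h3
      linarith
    set φ : ℂ → ℂ := fun w => G w / (((2*s : ℝ) : ℂ) - G w) with hφdef
    have hφd : DifferentiableOn ℂ φ (ball 0 (2*R)) := by
      apply DifferentiableOn.div
      · exact (hg.sub_const _).differentiableOn
      · exact ((differentiable_const _).sub (hg.sub_const _)).differentiableOn
      · exact hden
    have hφ0 : φ 0 = 0 := by simp [hφdef, hG]
    have hkey : ∀ w ∈ ball (0:ℂ) (2*R), ‖G w‖ < ‖((2*s:ℝ):ℂ) - G w‖ := by
      intro w hw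
      have h2 := hReG w hw
      have hsq : (‖G w‖)^2 < (‖((2*s:ℝ):ℂ) - G w‖)^2 := by
        rw [Complex.sq_norm, Complex.sq_norm, Complex.normSq_apply, Complex.normSq_apply]
        simp only [Complex.sub_re, Complex.sub_im, Complex.ofReal_re, Complex.ofReal_im, zero_sub]
        nlinarith
      exact lt_of_pow_lt_pow_left₀ 2 (norm_nonneg _) hsq
    have hmaps : Set.MapsTo φ (ball 0 (2*R)) (ball (φ 0) 1) := by
      intro w hw
      rw [hφ0, mem_ball_zero_iff]
      have h1 := hkey w hw
      have h2 : (0:ℝ) ≤ ‖G w‖ := norm_nonneg _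
      show ‖G w / (((2*s:ℝ):ℂ) - G w)‖ < 1
      rw [norm_div]
      rw [div_lt_one (lt_of_le_of_lt h2 h1)]
      exact h1
    rcases eq_or_ne z 0 with rfl | hz0
    · simp only [hG, sub_self, norm_zero]
      positivity
    · have hzball : z ∈ ball (0:ℂ) (2*R) := by
        rw [mem_ball_zero_iff]
        calc ‖z‖ ≤ R := hz
        _ < 2*R := by linarith
      have hds := Complex.norm_dslope_le_div_of_mapsTo_ball hφd (hmaps.mono_right ball_subset_closedBall) hzball
      have hslope : dslope φ 0 z = φ z / z := by
        rw [dslope_of_ne _ hz0, slope_def_field, hφ0, sub_zero, sub_zero]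
      rw [hslope, norm_div] at hds
      have hzpos : 0 < ‖z‖ := norm_pos_iff.mpr hz0
      have hφz : ‖φ z‖ ≤ 1/2 := by
        have h2 := (div_le_div_iff₀ hzpos (by linarith : (0:ℝ) < 2*R)).mp hds
        have hz' : ‖z‖ ≤ R := hz
        nlinarith [norm_nonneg (φ z)]
      have hGz : G z = φ z * (((2*s:ℝ):ℂ) - G z) := (div_mul_cancel₀ _ (hden z hzball)).symm
      have hden_le : ‖((2*s:ℝ):ℂ) - G z‖ ≤ 2*s + ‖G z‖ := by
        refine (norm_sub_le _ _).trans ?_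
        have : ‖((2*s:ℝ):ℂ)‖ = |2*s| := Complex.norm_real _
        rw [this, abs_of_pos (by linarith)]
      have hnorm : ‖G z‖ ≤ (1/2) * (2*s + ‖G z‖) := by
        calc ‖G z‖ = ‖φ z‖ * ‖((2*s:ℝ):ℂ) - G z‖ := by rw [← norm_mul, ← hGz]
        _ ≤ (1/2) * (2*s + ‖G z‖) := by
            apply mul_le_mul hφz hden_le (norm_nonneg _) (by norm_num)
      show ‖G z‖ ≤ 2 * s
      linarith
  -- the derivative of g is bounded
  have hdg : Differentiable ℂ (deriv g) := by
    have h1 : AnalyticOnNhd ℂ g Set.univ := analyticOnNhd_univ_iff_differentiable.2 hg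
    exact analyticOnNhd_univ_iff_differentiable.1 h1.deriv
  have hderiv_bdd : ∀ w : ℂ, ‖deriv g w‖ ≤ 4 * |b| := by
    intro w
    set D : ℝ := ‖g 0‖ + 2*c₁ + 4 * |b| * ‖w‖ with hD
    have key : ∀ R : ℝ, 1 ≤ R → ‖deriv g w‖ ≤ D / R + 4 * |b| := by
      intro R hR1
      have hRpos : (0:ℝ) < R := by linarith
      have hR'pos : (0:ℝ) < ‖w‖ + R := by
        have := norm_nonneg w; linarith
      have hsph : ∀ ζ ∈ sphere w R, ‖g ζ‖ ≤ D + 4 * |b| * R := by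
        intro ζ hζ
        have hζw : ‖ζ - w‖ = R := mem_sphere_iff_norm.mp hζ
        have hζle : ‖ζ‖ ≤ ‖w‖ + R := by
          calc ‖ζ‖ = ‖ζ - w + w‖ := by congr 1; ring
          _ ≤ ‖ζ - w‖ + ‖w‖ := norm_add_le _ _
          _ = ‖w‖ + R := by rw [hζw]; ring
        have h1 := hbound (‖w‖ + R) hR'pos ζ hζle
        have h2 : ‖g ζ‖ ≤ ‖g 0‖ + ‖g ζ - g 0‖ := by
          calc ‖g ζ‖ = ‖g 0 + (g ζ - g 0)‖ := by congr 1; ring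
          _ ≤ ‖g 0‖ + ‖g ζ - g 0‖ := norm_add_le _ _
        rw [hD]
        nlinarith [abs_nonneg b]
      have h3 := Complex.norm_deriv_le_of_forall_mem_sphere_norm_le hRpos hg.diffContOnCl hsph
      have h4 : (D + 4 * |b| * R) / R = D / R + 4 * |b| := by
        field_simp
      rw [h4] at h3
      exact h3
    have hlim : Filter.Tendsto (fun R : ℝ => D / R + 4 * |b|) Filter.atTop (nhds (4 * |b|)) := by
      have h1 : Filter.Tendsto (fun R : ℝ => D / R) Filter.atTop (nhds 0) :=
        tendsto_const_nhds.div_atTop Filter.tendsto_id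
      have h2 : Filter.Tendsto (fun _ : ℝ => 4 * |b|) Filter.atTop (nhds (4 * |b|)) :=
        tendsto_const_nhds
      simpa using h1.add h2
    exact ge_of_tendsto hlim (Filter.eventually_atTop.2 ⟨1, key⟩)
  -- Liouville for deriv g
  have hconst : ∀ w : ℂ, deriv g w = deriv g 0 := by
    intro w
    apply hdg.apply_eq_apply_of_bounded
    rw [isBounded_iff_forall_norm_le]
    exact ⟨4 * |b|, by rintro x ⟨w, rfl⟩; exact hderiv_bdd w⟩
  -- integrate
  intro z
  have hψ : ∀ w : ℂ, HasDerivAt (fun w => g w - deriv g 0 * w) 0 w := by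
    intro w
    have h1 := (hg w).hasDerivAt.sub ((hasDerivAt_id w).const_mul (deriv g 0))
    rw [hconst w, mul_one, sub_self] at h1
    exact h1
  have hc := is_const_of_deriv_eq_zero (fun w => (hψ w).differentiableAt)
    (fun w => (hψ w).deriv) z 0
  simp only [mul_zero, sub_zero] at hc
  linear_combination hc

/-- an entire, zero-free function of exponential type which is bounded on the
horizontal line `{t + i : t ∈ ℝ}` has the form `C₀ e^{iaz}` with `C₀ ≠ 0` and `a ∈ ℝ`. -/
theorem stmt_18 (f : ℂ → ℂ) (hf : Differentiable ℂ f) (hnz : ∀ z, f z ≠ 0)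
    (A C : ℝ) (hgrow : ∀ z : ℂ, ‖f z‖ ≤ C * Real.exp (A * ‖z‖))
    (M : ℝ) (hbd : ∀ t : ℝ, ‖f ((t : ℂ) + Complex.I)‖ ≤ M) :
    ∃ (C₀ : ℂ) (a : ℝ), C₀ ≠ 0 ∧
      ∀ z : ℂ, f z = C₀ * Complex.exp (Complex.I * (a : ℂ) * z) := by
  obtain ⟨g, hgd, hexp⟩ := exists_entire_log f hf hnz
  have hCpos : 0 < C := by
    have h0 := hgrow 0
    have h1 : 0 < ‖f 0‖ := norm_pos_iff.mpr (hnz 0)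
    nlinarith [Real.exp_pos (A * ‖(0:ℂ)‖)]
  have hre : ∀ z, (g z).re ≤ Real.log C + A * ‖z‖ := by
    intro z
    have h1 : Real.exp ((g z).re) = ‖f z‖ := by
      rw [hexp z, Complex.norm_exp]
    have h3 : Real.exp ((g z).re) ≤ Real.exp (Real.log C + A * ‖z‖) := by
      rw [Real.exp_add, Real.exp_log hCpos, h1]
      exact hgrow z
    exact Real.exp_le_exp.mp h3
  have haff := entire_affine_of_re_le g hgd (Real.log C) A hre
  set b₀ : ℂ := deriv g 0 with hb₀
  have hMpos : 0 < M :=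
    lt_of_lt_of_le (norm_pos_iff.mpr (hnz ((0:ℝ) + Complex.I))) (hbd 0)
  have hline : ∀ t : ℝ, (g 0).re + (b₀.re * t - b₀.im) ≤ Real.log M := by
    intro t
    have h1 := hbd t
    rw [hexp, haff, Complex.norm_exp] at h1
    have h2 := (Real.le_log_iff_exp_le hMpos).mpr h1
    have h3 : (g 0 + b₀ * ((t : ℂ) + Complex.I)).re = (g 0).re + (b₀.re * t - b₀.im) := by
      simp [Complex.add_re, Complex.mul_re, Complex.add_im, Complex.ofReal_re,
        Complex.ofReal_im, Complex.I_re, Complex.I_im]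
    rw [h3] at h2
    exact h2
  have hre0 : b₀.re = 0 := by
    by_contra h
    set c : ℝ := Real.log M - (g 0).re + b₀.im with hc
    have h1 := hline ((c + 1) / b₀.re)
    rw [mul_div_cancel₀ _ h] at h1
    simp only [hc] at h1
    linarith
  refine ⟨Complex.exp (g 0), b₀.im, Complex.exp_ne_zero _, fun z => ?_⟩
  rw [hexp z, haff z, Complex.exp_add]
  have hb : b₀ = Complex.I * (b₀.im : ℂ) := by
    apply Complex.ext <;> simp [hre0]
  congr 2
  rw [← hb]
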